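/- Let μ and ν be charges on 𝒜 and let μ̂ and ν̂ be their Stone extensions. Then μ and ν are singular (μ ⊥ ν) if and only if μ̂ and ν̂ are strongly singular as measures, i.e., there exists a Borel set E ⊆ F with μ̂(E) = 0 and ν̂(F \ E) = 0. -/

import Mathlib

open Filter Topology MeasureTheory

variable {X : Type*}

/-- A field (algebra) of subsets of `X`. -/
def IsSetField (𝒜 : Set (Set X)) : Prop :=
  ∅ ∈ 𝒜 ∧ Set.univ ∈ 𝒜 ∧ (∀ A ∈ 𝒜, Aᶜ ∈ 𝒜) ∧ ∀ A ∈ 𝒜, ∀ B ∈ 𝒜, A ∪ B ∈ 𝒜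

/-- A σ-algebra of subsets of `X`. -/
def IsSigmaField (𝒜 : Set (Set X)) : Prop :=
  ∅ ∈ 𝒜 ∧ Set.univ ∈ 𝒜 ∧ (∀ A ∈ 𝒜, Aᶜ ∈ 𝒜) ∧
    ∀ A : ℕ → Set X, (∀ n, A n ∈ 𝒜) → (⋃ n, A n) ∈ 𝒜

/-- A (nonnegative, bounded) charge on the field `𝒜`: a nonnegative finitely
additive real-valued set function vanishing on `∅`. -/
def IsCharge (𝒜 : Set (Set X)) (μ : Set X → ℝ) : Prop :=
  μ ∅ = 0 ∧ (∀ A ∈ 𝒜, 0 ≤ μ A) ∧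
    ∀ A ∈ 𝒜, ∀ B ∈ 𝒜, Disjoint A B → μ (A ∪ B) = μ A + μ B

/-- `ν` is absolutely continuous w.r.t. `μ` (ε–δ sense), `ν ≪ μ`. -/
def AbsCont (𝒜 : Set (Set X)) (ν μ : Set X → ℝ) : Prop :=
  ∀ ε : ℝ, 0 < ε → ∃ δ : ℝ, 0 < δ ∧ ∀ A ∈ 𝒜, μ A < δ → ν A < ε

/-- `ν` is weakly absolutely continuous w.r.t. `μ`, `ν ≺ μ`. -/
def WeakAbsCont (𝒜 : Set (Set X)) (ν μ : Set X → ℝ) : Prop :=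
  ∀ A ∈ 𝒜, μ A = 0 → ν A = 0

/-- `μ` and `ν` are singular, `μ ⊥ ν`. -/
def Sing (𝒜 : Set (Set X)) (μ ν : Set X → ℝ) : Prop :=
  ∀ ε : ℝ, 0 < ε → ∃ D ∈ 𝒜, μ D < ε ∧ ν Dᶜ < ε

/-- `μ` and `ν` are strongly singular. -/
def StrongSing (𝒜 : Set (Set X)) (μ ν : Set X → ℝ) : Prop :=
  ∃ D ∈ 𝒜, μ D = 0 ∧ ν Dᶜ = 0

/-- The additive property of a charge: for every `ε > 0` and every increasing
sequence `Aᵢ` in `𝒜` there is `B ∈ 𝒜` with `μ B ≤ lim_i μ (A i) + ε` and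
`μ (A i \ B) = 0` for all `i`. -/
def HasAdditiveProperty (𝒜 : Set (Set X)) (μ : Set X → ℝ) : Prop :=
  ∀ ε : ℝ, 0 < ε → ∀ A : ℕ → Set X, (∀ i, A i ∈ 𝒜) → Monotone A →
    ∃ B ∈ 𝒜, ∃ L : ℝ, Tendsto (fun i => μ (A i)) atTop (𝓝 L) ∧
      μ B ≤ L + ε ∧ ∀ i, μ (A i \ B) = 0

/-- The support of a Borel measure: points all of whose open neighborhoods
have positive measure. -/
def msupp {F : Type*} [TopologicalSpace F] [MeasurableSpace F] (m : Measure F) : Set F :=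
  {x | ∀ U : Set F, IsOpen U → x ∈ U → 0 < m U}


lemma ofReal_half_pow (k : ℕ) : ENNReal.ofReal ((1/2 : ℝ)^k) = (1/2 : ENNReal)^k := by
  rw [ENNReal.ofReal_pow (by norm_num)]
  congr 1
  rw [ENNReal.ofReal_div_of_pos (by norm_num)]
  simp

lemma clopen_sandwich {F : Type*} [TopologicalSpace F] [CompactSpace F] [T2Space F]
    [TotallyDisconnectedSpace F] {K U : Set F} (hK : IsCompact K) (hU : IsOpen U)
    (hKU : K ⊆ U) : ∃ C : Set F, IsClopen C ∧ K ⊆ C ∧ C ⊆ U := by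
  have h : ∀ x ∈ K, ∃ V : Set F, IsClopen V ∧ x ∈ V ∧ V ⊆ U := fun x hx =>
    compact_exists_isClopen_in_isOpen hU (hKU hx)
  choose! V hVc hxV hVU using h
  obtain ⟨t, ht⟩ := hK.elim_finite_subcover (fun x : K => V x) (fun x => (hVc x x.2).isOpen)
    (fun x hx => Set.mem_iUnion.2 ⟨⟨x, hx⟩, hxV x hx⟩)
  refine ⟨⋃ x ∈ t, V x, ?_, ht, ?_⟩
  · exact Set.Finite.isClopen_biUnion t.finite_toSet (fun x _ => hVc x x.2)
  · exact Set.iUnion₂_subset fun x _ => hVU x x.2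

/-- `μ ⊥ ν` iff the Stone extensions `μ̂` and `ν̂` are strongly singular. -/
theorem singular_iff_stone_stronglySingular
    {F : Type*} [TopologicalSpace F] [CompactSpace F] [T2Space F]
    [TotallyDisconnectedSpace F] [Nonempty F] [MeasurableSpace F] [BorelSpace F]
    (𝒜 : Set (Set X)) (h𝒜 : IsSetField 𝒜)
    (μ ν : Set X → ℝ) (hμ : IsCharge 𝒜 μ) (hν : IsCharge 𝒜 ν)
    (φ : Set X → Set F)
    (hφ_inj : ∀ A ∈ 𝒜, ∀ B ∈ 𝒜, φ A = φ B → A = B)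
    (hφ_clopen : ∀ A ∈ 𝒜, IsClopen (φ A))
    (hφ_surj : ∀ C : Set F, IsClopen C → ∃ A ∈ 𝒜, φ A = C)
    (hφ_empty : φ ∅ = ∅)
    (hφ_univ : φ Set.univ = Set.univ)
    (hφ_union : ∀ A ∈ 𝒜, ∀ B ∈ 𝒜, φ (A ∪ B) = φ A ∪ φ B)
    (hφ_compl : ∀ A ∈ 𝒜, φ Aᶜ = (φ A)ᶜ)
    (μhat νhat : Measure F)
    [IsFiniteMeasure μhat] [μhat.Regular] [IsFiniteMeasure νhat] [νhat.Regular]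
    (hμhat : ∀ A ∈ 𝒜, μhat (φ A) = ENNReal.ofReal (μ A))
    (hνhat : ∀ A ∈ 𝒜, νhat (φ A) = ENNReal.ofReal (ν A)) :
    Sing 𝒜 μ ν ↔
      ∃ E : Set F, MeasurableSet E ∧ μhat E = 0 ∧ νhat Eᶜ = 0 := by
  
  obtain ⟨-, -, h𝒜c, -⟩ := h𝒜
  constructor
  · intro hs
    have hchoice : ∀ n : ℕ, ∃ D ∈ 𝒜, μ D < (1/2)^n ∧ ν Dᶜ < (1/2)^n := fun n =>
      hs _ (by positivity)
    choose D hD hDμ hDν using hchoice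
    have hmeas : ∀ A ∈ 𝒜, MeasurableSet (φ A) := fun A hA =>
      (hφ_clopen A hA).isOpen.measurableSet
    set E : Set F := ⋂ N, ⋃ n, φ (D (N + n)) with hEdef
    have hEmeas : MeasurableSet E :=
      MeasurableSet.iInter fun N => MeasurableSet.iUnion fun n => hmeas _ (hD _)
    have hbound : ∀ k, μhat (φ (D k)) ≤ (1/2 : ENNReal)^k := by
      intro k
      rw [hμhat _ (hD k)]
      calc ENNReal.ofReal (μ (D k)) ≤ ENNReal.ofReal ((1/2 : ℝ)^k) :=
            ENNReal.ofReal_le_ofReal (hDμ k).le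
        _ = (1/2 : ENNReal)^k := ofReal_half_pow k
    have hEμ : μhat E = 0 := by
      have h1 : ∀ N : ℕ, μhat E ≤ (1/2 : ENNReal)^N * 2 := by
        intro N
        calc μhat E ≤ μhat (⋃ n, φ (D (N + n))) :=
              measure_mono (Set.iInter_subset _ N)
          _ ≤ ∑' n, μhat (φ (D (N + n))) := measure_iUnion_le _
          _ ≤ ∑' n : ℕ, (1/2 : ENNReal)^(N + n) := ENNReal.tsum_le_tsum fun n => hbound _
          _ = (1/2 : ENNReal)^N * 2 := by
              simp only [pow_add]
              rw [ENNReal.tsum_mul_left, ENNReal.tsum_geometric]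
              congr 1
              rw [one_div, ENNReal.one_sub_inv_two, inv_inv]
      have h2 : Tendsto (fun N : ℕ => (1/2 : ENNReal)^N * 2) atTop (𝓝 0) := by
        have := ENNReal.Tendsto.mul_const
          (ENNReal.tendsto_pow_atTop_nhds_zero_of_lt_one
            (by norm_num : (1/2 : ENNReal) < 1)) (Or.inr (by norm_num : (2:ENNReal) ≠ ⊤))
        simpa using this
      exact le_antisymm (ge_of_tendsto' h2 h1) zero_le
    have hEν : νhat Eᶜ = 0 := by
      have hEc : Eᶜ = ⋃ N, ⋂ n, (φ (D (N + n)))ᶜ := by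
        rw [hEdef]
        simp [Set.compl_iInter, Set.compl_iUnion]
      rw [hEc]
      refine measure_iUnion_null fun N => ?_
      have h1 : ∀ m : ℕ, νhat (⋂ n, (φ (D (N + n)))ᶜ) ≤ (1/2 : ENNReal)^(N + m) := by
        intro m
        calc νhat (⋂ n, (φ (D (N + n)))ᶜ) ≤ νhat ((φ (D (N + m)))ᶜ) :=
              measure_mono (Set.iInter_subset _ m)
          _ = νhat (φ (D (N + m))ᶜ) := by rw [hφ_compl _ (hD _)]
          _ = ENNReal.ofReal (ν (D (N + m))ᶜ) := hνhat _ (h𝒜c _ (hD _))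
          _ ≤ ENNReal.ofReal ((1/2 : ℝ)^(N+m)) := ENNReal.ofReal_le_ofReal (hDν _).le
          _ = (1/2 : ENNReal)^(N+m) := ofReal_half_pow _
      have h2 : Tendsto (fun m : ℕ => (1/2 : ENNReal)^(N + m)) atTop (𝓝 0) := by
        simpa [pow_add] using ENNReal.Tendsto.const_mul
          (ENNReal.tendsto_pow_atTop_nhds_zero_of_lt_one
            (by norm_num : (1/2 : ENNReal) < 1))
          (Or.inr (by simp : (1/2 : ENNReal)^N ≠ ⊤))
      exact le_antisymm (ge_of_tendsto' h2 h1) zero_le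
    exact ⟨E, hEmeas, hEμ, hEν⟩
  · rintro ⟨E, hEm, hEμ, hEν⟩ ε hε
    have hε' : (0 : ENNReal) < ENNReal.ofReal ε := ENNReal.ofReal_pos.mpr hε
    obtain ⟨U, hEU, hUo, hUμ⟩ := Set.exists_isOpen_lt_of_lt E _ (hEμ ▸ hε')
    obtain ⟨V, hEV, hVo, hVν⟩ := Set.exists_isOpen_lt_of_lt Eᶜ _ (hEν ▸ hε')
    have hVcE : Vᶜ ⊆ E := by
      rw [← compl_compl E]; exact Set.compl_subset_compl.mpr hEV
    obtain ⟨C, hCc, hVC, hCU⟩ := clopen_sandwich (IsClosed.isCompact hVo.isClosed_compl)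
      hUo (hVcE.trans hEU)
    obtain ⟨A, hA, hAC⟩ := hφ_surj C hCc
    refine ⟨A, hA, ?_, ?_⟩
    · have : ENNReal.ofReal (μ A) < ENNReal.ofReal ε := by
        rw [← hμhat A hA, hAC]
        exact lt_of_le_of_lt (measure_mono hCU) hUμ
      rwa [ENNReal.ofReal_lt_ofReal_iff hε] at this
    · have hCV : Cᶜ ⊆ V := by
        rw [← compl_compl V]; exact Set.compl_subset_compl.mpr hVC
      have : ENNReal.ofReal (ν Aᶜ) < ENNReal.ofReal ε := by
        rw [← hνhat _ (h𝒜c A hA), hφ_compl A hA, hAC]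
        exact lt_of_le_of_lt (measure_mono hCV) hVν
      rwa [ENNReal.ofReal_lt_ofReal_iff hε] at this
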